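/- If NDRK(T̄) ≥ ω₁ then NDRK(T̄) = ∞; that is, if some m ∈ M_{T̄,Ō} has ndrk(m) ≥ ω₁ then there is m with ndrk(m) = ∞, equivalently sup{ndrk(m)+1 : m ∈ M_{T̄,Ō}} is either < ω₁ or equal to ∞. -/

import Mathlib

attribute [local instance] Classical.propDecidable

/-- Finite binary sequences, as lists over `ZMod 2`. -/
abbrev BSeq : Type := List (ZMod 2)

/-- Pad/truncate `ρ` to length exactly `n`. -/
def padTo (ρ : BSeq) (n : ℕ) : BSeq := (ρ ++ List.replicate n 0).take n

theorem padTo_length (ρ : BSeq) (n : ℕ) : (padTo ρ n).length = n := by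
  unfold padTo
  rw [List.length_take, List.length_append, List.length_replicate]
  omega

/-- A level set: a nonempty set of binary sequences, all of one length. -/
structure LSet where
  len : ℕ
  elts : Set BSeq
  ne : elts.Nonempty
  hlen : ∀ x ∈ elts, x.length = len

/-- Translation of a level set by a sequence (of the matching length). -/
def LSet.tr (w : LSet) (ρ : BSeq) : LSet where
  len := w.len
  elts := (fun x => List.zipWith (· + ·) x (padTo ρ w.len)) '' w.elts
  ne := w.ne.image _
  hlen := by
    rintro x ⟨y, hy, rfl⟩
    rw [List.length_zipWith, padTo_length, w.hlen y hy, Nat.min_self]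

/-- Restriction of a level set to a smaller length. -/
def LSet.res (w : LSet) (ℓ : ℕ) (h : ℓ ≤ w.len) : LSet where
  len := ℓ
  elts := (List.take ℓ) '' w.elts
  ne := w.ne.image _
  hlen := by
    rintro x ⟨y, hy, rfl⟩
    rw [List.length_take, w.hlen y hy]
    omega

/-- A simple base (Definition 3.2): a strict partial order on level sets
satisfying clauses (a), (b), (c). -/
structure SimpleBase where
  mem : LSet → Prop
  prec : LSet → LSet → Prop
  prec_mem : ∀ u v, prec u v → mem u ∧ mem v
  irrefl : ∀ u, ¬ prec u u
  trans : ∀ u v w, prec u v → prec v w → prec u w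
  restr : ∀ u v, prec u v → u.len < v.len ∧ u.elts = (List.take u.len) '' v.elts
  ext : ∀ u, mem u → ∃ v, prec u v
  tr_mem : ∀ u ρ, ρ.length = u.len → mem u → mem (u.tr ρ)
  tr_prec : ∀ u v ρ, ρ.length = v.len → prec u v → prec (u.tr (ρ.take u.len)) (v.tr ρ)

/-- An `O`-tower: a `≺`-increasing `ω`-sequence of level sets. -/
def Tower (S : SimpleBase) (u : ℕ → LSet) : Prop := ∀ n, S.prec (u n) (u (n + 1))

/-- Restriction of `η ∈ 2^ω` to a finite length. -/
def resFn (η : ℕ → ZMod 2) (n : ℕ) : BSeq := List.ofFn (fun i : Fin n => η i)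

/-- The cover of a tower. -/
def cover (u : ℕ → LSet) : Set (ℕ → ZMod 2) :=
  {η | ∀ n, resFn η (u n).len ∈ (u n).elts}
/-- An indexed base `⟨O_i : i < i*⟩`, `0 < i* ≤ ω` (`i* = ⊤` codes `ω`). -/
structure IndexedBase where
  istar : ℕ∞
  pos : 0 < istar
  base : ℕ → SimpleBase

/-- Niceness of an indexed base (Definition 3.7, clauses (i)–(v)). -/
def Nice (B : IndexedBase) : Prop :=
  ((6 : ℕ∞) ≤ B.istar ∨ ∃ i : ℕ, (i : ℕ∞) < B.istar ∧ ∀ u, (B.base i).mem u →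
      ∃ v, (B.base i).prec u v ∧ 6 ≤ v.elts.ncard) ∧
  (∀ i : ℕ, (i : ℕ∞) < B.istar → ∀ u v v' v'', (B.base i).prec u v → (B.base i).prec v v' →
      (B.base i).prec v' v'' → ∀ ℓ (h1 : v.len ≤ ℓ) (h2 : ℓ ≤ v'.len),
      (B.base i).mem (v'.res ℓ h2) ∧ (B.base i).prec u (v'.res ℓ h2) ∧
      (B.base i).prec (v'.res ℓ h2) v'') ∧
  (∀ i : ℕ, (i : ℕ∞) < B.istar → ∀ u v, (B.base i).prec u v → ∀ ℓ, v.len < ℓ →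
      ∀ v' : LSet, v'.len = ℓ → (∀ ν ∈ v.elts, ∃! η, η ∈ v'.elts ∧ ν <+: η) →
      (B.base i).mem v' ∧ (B.base i).prec u v') ∧
  (∀ i : ℕ, (i : ℕ∞) < B.istar → ∀ u v u', (B.base i).prec u v → u'.elts ⊆ u.elts →
      u'.len = u.len → (B.base i).mem u' → ∀ v' : LSet, v'.len = v.len →
      v'.elts = {η ∈ v.elts | List.take u.len η ∈ u'.elts} →
      (B.base i).mem v' ∧ (B.base i).prec u' v') ∧
  (B.istar = ⊤ → ∀ i : ℕ, {j : ℕ | B.base j = B.base i}.Infinite)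
/-- A subtree of `2^{<ω}` (closed under initial segments). -/
def IsTree (T : Set BSeq) : Prop := ∀ s ∈ T, ∀ t, t <+: s → t ∈ T

/-- A tree has no maximal nodes. -/
def NoMaxNodes (T : Set BSeq) : Prop := ∀ s ∈ T, ∃ t ∈ T, s <+: t ∧ s ≠ t

/-- A finite approximation tuple `m = (ℓ, ι, u, h̄, ḡ)` (Definition 3.9 data). -/
structure MTuple where
  len : ℕ
  iota : ℕ
  u : Set BSeq
  g : ℕ → BSeq → BSeq → LSet
  h : ℕ → BSeq → BSeq → ℕ

/-- `m ∈ M_{T̄,Ō}` (Definition 3.9, clauses (a)–(e)). -/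
def IsM (T : ℕ → Set BSeq) (B : IndexedBase) (m : MTuple) : Prop :=
  0 < m.len ∧ (∀ x ∈ m.u, x.length = m.len) ∧ 2 ≤ m.u.ncard ∧
  (B.istar ≠ ⊤ → (m.iota : ℕ∞) = B.istar) ∧
  (B.istar = ⊤ → 3 ≤ m.iota) ∧
  (∀ i < m.iota, ∀ η ∈ m.u, ∀ ν ∈ m.u, η ≠ ν →
      (B.base i).mem (m.g i η ν) ∧ m.g i η ν = m.g i ν η ∧ (m.g i η ν).len = m.len) ∧
  (∀ i i' : ℕ, i < i' → i' < m.iota → ∀ η ∈ m.u, ∀ ν ∈ m.u, η ≠ ν →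
      Disjoint (m.g i η ν).elts (m.g i' η ν).elts) ∧
  (∀ i < m.iota, ∀ η ∈ m.u, ∀ ν ∈ m.u, η ≠ ν →
      ∀ σ ∈ (m.g i η ν).elts, List.zipWith (· + ·) η σ ∈ T (m.h i η ν))

/-- `m ⊑ n`: `n` strictly extends `m` (Definition 3.11). -/
def Sqsub (B : IndexedBase) (m n : MTuple) : Prop :=
  m.len < n.len ∧ m.iota ≤ n.iota ∧ m.u = (List.take m.len) '' n.u ∧
  ∀ η ∈ n.u, ∀ ν ∈ n.u, η ≠ ν → List.take m.len η ≠ List.take m.len ν →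
    ∀ i < m.iota,
      (B.base i).prec (m.g i (List.take m.len η) (List.take m.len ν)) (n.g i η ν) ∧
      m.h i (List.take m.len η) (List.take m.len ν) = n.h i η ν

/-- The derived hierarchy `D^{T̄}(α)` (Definition 3.12(1)). -/
def Dset (T : ℕ → Set BSeq) (B : IndexedBase) (α : Ordinal.{0}) : Set MTuple :=
  @Ordinal.limitRecOn (fun _ : Ordinal.{0} => Set MTuple) α
    {m | IsM T B m}
    (fun _ Dβ => {m | IsM T B m ∧ ∀ ν ∈ m.u, ∃ n ∈ Dβ, Sqsub B m n ∧
        (B.istar = ⊤ → m.iota < n.iota) ∧ 2 ≤ {η ∈ n.u | ν <+: η}.ncard})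
    (fun o _ ih => ⋂ (β : Ordinal.{0}), ⋂ (h : β < o), ih β h)

/-- The non-disjointness rank `ndrk` (Definition 3.12(2)); `⊤` codes `∞`. -/
noncomputable def ndrk (T : ℕ → Set BSeq) (B : IndexedBase) (m : MTuple) :
    WithTop Ordinal.{0} :=
  if ∀ α : Ordinal.{0}, m ∈ Dset T B α then ⊤
  else ((sInf {α : Ordinal.{0} | m ∉ Dset T B (α + 1)} : Ordinal) : WithTop Ordinal)


section Aux

open Ordinal

variable (T : ℕ → Set BSeq) (B : IndexedBase)

lemma Dset_zero : Dset T B 0 = {m | IsM T B m} := by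
  rw [Dset, Ordinal.limitRecOn_zero]

lemma Dset_succ (β : Ordinal.{0}) :
    Dset T B (β + 1) = {m | IsM T B m ∧ ∀ ν ∈ m.u, ∃ n ∈ Dset T B β, Sqsub B m n ∧
        (B.istar = ⊤ → m.iota < n.iota) ∧ 2 ≤ {η ∈ n.u | ν <+: η}.ncard} := by
  rw [Dset, Ordinal.add_one_eq_succ, Ordinal.limitRecOn_succ]
  rfl

lemma Dset_limit {o : Ordinal.{0}} (ho : Order.IsSuccLimit o) :
    Dset T B o = ⋂ (β : Ordinal.{0}), ⋂ (_ : β < o), Dset T B β := by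
  rw [Dset, Ordinal.limitRecOn_limit _ _ _ _ ho]
  rfl

lemma Dset_step : ∀ γ : Ordinal.{0}, Dset T B (γ + 1) ⊆ Dset T B γ := by
  intro γ
  induction γ using Ordinal.induction with
  | h γ IH =>
    rcases Ordinal.zero_or_succ_or_isSuccLimit γ with rfl | ⟨δ, rfl⟩ | hlim
    · rw [Dset_succ, Dset_zero]
      intro m hm
      exact hm.1
    · rw [← Ordinal.add_one_eq_succ]
      intro m hm
      rw [Dset_succ T B (δ + 1)] at hm
      rw [Dset_succ T B δ]
      refine ⟨hm.1, fun ν hν => ?_⟩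
      obtain ⟨n, hn, rest⟩ := hm.2 ν hν
      exact ⟨n, IH δ (lt_add_one δ) hn, rest⟩
    · intro m hm
      rw [Dset_limit T B hlim]
      simp only [Set.mem_iInter]
      have key : ∀ β : Ordinal.{0}, β < γ → m ∈ Dset T B β := by
        intro β
        induction β using Ordinal.induction with
        | h β IH2 =>
          intro hβ
          rw [Dset_succ T B γ] at hm
          rcases Ordinal.zero_or_succ_or_isSuccLimit β with rfl | ⟨δ, rfl⟩ | hlim2
          · rw [Dset_zero]
            exact hm.1
          · rw [← Ordinal.add_one_eq_succ] at hβ ⊢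
            rw [Dset_succ T B δ]
            refine ⟨hm.1, fun ν hν => ?_⟩
            obtain ⟨n, hn, rest⟩ := hm.2 ν hν
            rw [Dset_limit T B hlim] at hn
            simp only [Set.mem_iInter] at hn
            exact ⟨n, hn δ ((lt_add_one δ).trans hβ), rest⟩
          · rw [Dset_limit T B hlim2]
            simp only [Set.mem_iInter]
            intro δ hδ
            exact IH2 δ hδ (hδ.trans hβ)
      exact key
    
lemma Dset_antitone : ∀ α β : Ordinal.{0}, β ≤ α → Dset T B α ⊆ Dset T B β := by
  intro α
  induction α using Ordinal.induction with
  | h α IH =>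
    intro β hβ
    rcases eq_or_lt_of_le hβ with rfl | hlt
    · exact subset_rfl
    rcases Ordinal.zero_or_succ_or_isSuccLimit α with rfl | ⟨δ, rfl⟩ | hlim
    · exact absurd hlt (zero_le (a := β)).not_gt
    · have hβδ : β ≤ δ := Order.lt_succ_iff.mp hlt
      rw [← Ordinal.add_one_eq_succ]
      exact fun x hx => IH δ (Order.lt_succ δ) β hβδ (Dset_step T B δ hx)
    · intro m hm
      rw [Dset_limit T B hlim] at hm
      simp only [Set.mem_iInter] at hm
      exact hm β hlt

lemma Dset_isM {α : Ordinal.{0}} {m : MTuple} (hm : m ∈ Dset T B α) : IsM T B m := by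
  have := Dset_antitone T B α 0 (zero_le (a := α)) hm
  rwa [Dset_zero] at this

lemma Dset_stab {β : Ordinal.{0}} (hst : Dset T B (β + 1) = Dset T B β) :
    ∀ γ : Ordinal.{0}, β ≤ γ → Dset T B γ = Dset T B β := by
  intro γ
  induction γ using Ordinal.induction with
  | h γ IH =>
    intro hβγ
    rcases eq_or_lt_of_le hβγ with rfl | hlt
    · rfl
    rcases Ordinal.zero_or_succ_or_isSuccLimit γ with rfl | ⟨δ, rfl⟩ | hlim
    · exact absurd hlt (zero_le (a := β)).not_gt
    · have hβδ : β ≤ δ := Order.lt_succ_iff.mp hlt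
      have h1 : Dset T B δ = Dset T B β := IH δ (Order.lt_succ δ) hβδ
      rw [← Ordinal.add_one_eq_succ, Dset_succ T B δ, h1, ← Dset_succ T B β, hst]
    · apply subset_antisymm
      · intro m hm
        rw [Dset_limit T B hlim] at hm
        simp only [Set.mem_iInter] at hm
        exact hm β hlt
      · intro m hm
        rw [Dset_limit T B hlim]
        simp only [Set.mem_iInter]
        intro δ hδ
        rcases le_total β δ with h | h
        · rw [IH δ hδ h]; exact hm
        · exact Dset_antitone T B β δ h hm

/-- Membership in `Dset` depends only on the "relevant" data of the tuple. -/
lemma Dset_congr_mp {m m' : MTuple}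
    (h2 : IsM T B m')
    (hlen : m.len = m'.len) (hiota : m.iota = m'.iota) (hu : m.u = m'.u)
    (hg : ∀ i < m.iota, ∀ η ∈ m.u, ∀ ν ∈ m.u, η ≠ ν → m.g i η ν = m'.g i η ν)
    (hh : ∀ i < m.iota, ∀ η ∈ m.u, ∀ ν ∈ m.u, η ≠ ν → m.h i η ν = m'.h i η ν) :
    ∀ α : Ordinal.{0}, m ∈ Dset T B α → m' ∈ Dset T B α := by
  intro α
  induction α using Ordinal.induction with
  | h α IH =>
    intro hm
    rcases Ordinal.zero_or_succ_or_isSuccLimit α with rfl | ⟨δ, rfl⟩ | hlim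
    · rw [Dset_zero]
      exact h2
    · rw [← Ordinal.add_one_eq_succ]
      rw [← Ordinal.add_one_eq_succ] at hm
      rw [Dset_succ T B δ] at hm ⊢
      refine ⟨h2, fun ν hν => ?_⟩
      obtain ⟨n, hn, hsq, hio, hnc⟩ := hm.2 ν (hu ▸ hν)
      refine ⟨n, hn, ?_, fun ht => hiota ▸ hio ht, hnc⟩
      obtain ⟨s1, s2, s3, s4⟩ := hsq
      refine ⟨hlen ▸ s1, hiota ▸ s2, by rw [← hlen, ← hu]; exact s3, ?_⟩
      intro η hη ν' hν' hne htne i hi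
      rw [← hlen] at htne ⊢
      rw [← hiota] at hi
      have hηu : List.take m.len η ∈ m.u := s3 ▸ ⟨η, hη, rfl⟩
      have hνu : List.take m.len ν' ∈ m.u := s3 ▸ ⟨ν', hν', rfl⟩
      have hgg := hg i hi _ hηu _ hνu htne
      have hhh := hh i hi _ hηu _ hνu htne
      rw [← hgg, ← hhh]
      exact s4 η hη ν' hν' hne htne i hi
    · rw [Dset_limit T B hlim] at hm ⊢
      simp only [Set.mem_iInter] at hm ⊢
      intro β hβ
      exact IH β hβ (hm β hβ)

/-- Every `LSet` has finite `elts`. -/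
lemma LSet.elts_finite (w : LSet) : w.elts.Finite :=
  (List.finite_length_eq (ZMod 2) w.len).subset (fun x hx => w.hlen x hx)

lemma LSet.ext' {w w' : LSet} (h1 : w.len = w'.len) (h2 : w.elts = w'.elts) : w = w' := by
  cases w; cases w'
  simp_all

/-- Turn a set into a finset (junk value if infinite). -/
noncomputable def sfin {α : Type*} (s : Set α) : Finset α :=
  if h : s.Finite then h.toFinset else ∅

lemma sfin_inj {α : Type*} {s t : Set α} (hs : s.Finite) (ht : t.Finite)
    (h : sfin s = sfin t) : s = t := by
  rw [sfin, sfin, dif_pos hs, dif_pos ht] at h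
  rw [← hs.coe_toFinset, ← ht.coe_toFinset, h]

/-- A countable code type. -/
abbrev MCode : Type := ℕ × ℕ × Finset BSeq × Finset (ℕ × BSeq × BSeq × ℕ × Finset BSeq × ℕ)

/-- The graph of the relevant data of a tuple. -/
def mGraph (m : MTuple) : Set (ℕ × BSeq × BSeq × ℕ × Finset BSeq × ℕ) :=
  {t | t.1 < m.iota ∧ t.2.1 ∈ m.u ∧ t.2.2.1 ∈ m.u ∧ t.2.1 ≠ t.2.2.1 ∧
    t.2.2.2.1 = (m.g t.1 t.2.1 t.2.2.1).len ∧
    t.2.2.2.2.1 = sfin (m.g t.1 t.2.1 t.2.2.1).elts ∧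
    t.2.2.2.2.2 = m.h t.1 t.2.1 t.2.2.1}

lemma mGraph_finite {m : MTuple} (hu : m.u.Finite) : (mGraph m).Finite := by
  have : mGraph m ⊆ (fun p : ℕ × BSeq × BSeq =>
      (p.1, p.2.1, p.2.2, (m.g p.1 p.2.1 p.2.2).len, sfin (m.g p.1 p.2.1 p.2.2).elts,
        m.h p.1 p.2.1 p.2.2)) '' ((Set.Iio m.iota) ×ˢ (m.u ×ˢ m.u)) := by
    rintro ⟨i, η, ν, l, e, k⟩ ⟨t1, t2, t3, t4, t5, t6, t7⟩
    simp only at t1 t2 t3 t4 t5 t6 t7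
    subst t5; subst t6; subst t7
    exact ⟨(i, η, ν), ⟨t1, t2, t3⟩, rfl⟩
  exact (((Set.finite_Iio m.iota).prod (hu.prod hu)).image _).subset this

noncomputable def mEncode (m : MTuple) : MCode :=
  (m.len, m.iota, sfin m.u, sfin (mGraph m))

lemma IsM.u_finite {m : MTuple} (h : IsM T B m) : m.u.Finite :=
  (List.finite_length_eq (ZMod 2) m.len).subset (fun x hx => h.2.1 x hx)

/-- Equal codes give equivalent `Dset`-membership. -/
lemma mEncode_eq_of {m m' : MTuple} (h1 : IsM T B m) (h2 : IsM T B m')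
    (he : mEncode m = mEncode m') (α : Ordinal.{0}) :
    m ∈ Dset T B α ↔ m' ∈ Dset T B α := by
  obtain ⟨e1, e2, e3, e4⟩ : m.len = m'.len ∧ m.iota = m'.iota ∧
      sfin m.u = sfin m'.u ∧ sfin (mGraph m) = sfin (mGraph m') := by
    have := he
    rw [mEncode, mEncode, Prod.ext_iff, Prod.ext_iff, Prod.ext_iff] at this
    exact ⟨this.1, this.2.1, this.2.2.1, this.2.2.2⟩
  have hu : m.u = m'.u := sfin_inj (h1.u_finite T B) (h2.u_finite T B) e3
  have hG : mGraph m = mGraph m' :=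
    sfin_inj (mGraph_finite (h1.u_finite T B)) (mGraph_finite (h2.u_finite T B)) e4
  have hgh : ∀ i < m.iota, ∀ η ∈ m.u, ∀ ν ∈ m.u, η ≠ ν →
      m.g i η ν = m'.g i η ν ∧ m.h i η ν = m'.h i η ν := by
    intro i hi η hη ν hν hne
    have hmem : (i, η, ν, (m.g i η ν).len, sfin (m.g i η ν).elts, m.h i η ν) ∈ mGraph m :=
      ⟨hi, hη, hν, hne, rfl, rfl, rfl⟩
    rw [hG] at hmem
    obtain ⟨_, _, _, _, g5, g6, g7⟩ := hmem
    refine ⟨LSet.ext' g5 (sfin_inj (LSet.elts_finite _) (LSet.elts_finite _) g6), g7⟩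
  constructor
  · exact Dset_congr_mp T B h2 e1 e2 hu
      (fun i hi η hη ν hν hne => (hgh i hi η hη ν hν hne).1)
      (fun i hi η hη ν hν hne => (hgh i hi η hη ν hν hne).2) α
  · refine Dset_congr_mp T B h1 e1.symm e2.symm hu.symm ?_ ?_ α
    · intro i hi η hη ν hν hne
      exact (hgh i (e2 ▸ hi) η (hu ▸ hη) ν (hu ▸ hν) hne).1.symm
    · intro i hi η hη ν hν hne
      exact (hgh i (e2 ▸ hi) η (hu ▸ hη) ν (hu ▸ hν) hne).2.symm

end Aux

/-- Lemma 3.10(7): if some tuple has rank `≥ ω₁`, then some tuple has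
rank `∞`. -/
theorem stmt19 (T : ℕ → Set BSeq) (hTt : ∀ n, IsTree (T n))
    (hTm : ∀ n, NoMaxNodes (T n)) (B : IndexedBase) (hB : Nice B)
    (h : ∃ m, IsM T B m ∧
      (((Cardinal.aleph 1).ord : Ordinal.{0}) : WithTop Ordinal.{0}) ≤ ndrk T B m) :
    ∃ m, IsM T B m ∧ ndrk T B m = (⊤ : WithTop Ordinal.{0}) := by
  obtain ⟨m₀, hm₀, hrank⟩ := h
  by_cases hall : ∀ α : Ordinal.{0}, m₀ ∈ Dset T B α
  · exact ⟨m₀, hm₀, by rw [ndrk, if_pos hall]⟩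
  exfalso
  set Ω : Ordinal.{0} := (Cardinal.aleph 1).ord with hΩdef
  set S : Set Ordinal.{0} := {α : Ordinal.{0} | m₀ ∉ Dset T B (α + 1)} with hSdef
  have hSne : S.Nonempty := by
    push_neg at hall
    obtain ⟨α, hα⟩ := hall
    exact ⟨α, fun hmem => hα (Dset_step T B α hmem)⟩
  set α₀ : Ordinal.{0} := sInf S with hα₀def
  have hndrk : ndrk T B m₀ = (α₀ : WithTop Ordinal.{0}) := by
    rw [ndrk, if_neg (by push_neg at hall ⊢; exact hall)]
  have hΩα₀ : Ω ≤ α₀ := by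
    rw [hndrk] at hrank
    exact_mod_cast hrank
  have hα₀S : m₀ ∉ Dset T B (α₀ + 1) := csInf_mem hSne
  have hlt_mem : ∀ β : Ordinal.{0}, β < α₀ → m₀ ∈ Dset T B (β + 1) := by
    intro β hβ
    by_contra hc
    exact absurd (csInf_le (OrderBot.bddBelow S) hc) (not_le_of_gt hβ)
  -- for every β < Ω there is a tuple in `Dset β \ Dset (β+1)`
  have hdrop : ∀ β : Ordinal.{0}, β < Ω → ∃ n, n ∈ Dset T B β ∧ n ∉ Dset T B (β + 1) := by
    intro β hβ
    by_contra hc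
    push_neg at hc
    have heq : Dset T B (β + 1) = Dset T B β :=
      subset_antisymm (Dset_step T B β) (fun n hn => hc n hn)
    have hβα₀ : β < α₀ := hβ.trans_le hΩα₀
    have h1 : Dset T B (α₀ + 1) = Dset T B β :=
      Dset_stab T B heq (α₀ + 1) (hβα₀.le.trans (le_of_lt (lt_add_one α₀)))
    have h2 : m₀ ∈ Dset T B β := heq ▸ hlt_mem β hβα₀
    exact hα₀S (h1 ▸ h2)
  choose nb hnb1 hnb2 using hdrop
  -- the encoding map is injective on these tuples
  have haux : ∀ (β : Ordinal.{0}) (hβ : β < Ω) (β' : Ordinal.{0}) (hβ' : β' < Ω),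
      β < β' → mEncode (nb β hβ) ≠ mEncode (nb β' hβ') := by
    intro β hβ β' hβ' hlt heq
    have h1 : IsM T B (nb β hβ) := Dset_isM T B (hnb1 β hβ)
    have h2 : IsM T B (nb β' hβ') := Dset_isM T B (hnb1 β' hβ')
    have hy : nb β' hβ' ∈ Dset T B (β + 1) := by
      have : β + 1 ≤ β' := by
        rw [Ordinal.add_one_eq_succ]
        exact Order.succ_le_of_lt hlt
      exact Dset_antitone T B β' (β + 1) this (hnb1 β' hβ')
    exact hnb2 β hβ ((mEncode_eq_of T B h1 h2 heq (β + 1)).mpr hy)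
  -- hence an injection of `Iio Ω` into the countable type `MCode`
  have hinj : Function.Injective (fun b : (Set.Iio Ω) => mEncode (nb b.1 b.2)) := by
    rintro ⟨β, hβ⟩ ⟨β', hβ'⟩ heq
    simp only at heq
    rcases lt_trichotomy β β' with hlt | heqo | hlt
    · exact absurd heq (haux β hβ β' hβ' hlt)
    · exact Subtype.ext heqo
    · exact absurd heq.symm (haux β' hβ' β hβ hlt)
  have hcnt : Countable (Set.Iio Ω) := hinj.countable
  have hle : Cardinal.mk (Set.Iio Ω) ≤ Cardinal.aleph0 := Cardinal.mk_le_aleph0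
  rw [Ordinal.mk_Iio_ordinal, Cardinal.card_ord, ← Cardinal.lift_aleph0.{1, 0},
    Cardinal.lift_le] at hle
  exact absurd hle (not_le_of_gt Cardinal.aleph0_lt_aleph_one)
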